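/- Let (X, δ) be a diversity and let T_X be its tight span. For every nonempty finite subset F ⊆ T_X, the quantity δ_T(F) = sup over all assignments f ↦ A_f (A_f a finite subset of X, for f ∈ F) of [ δ(⋃_{f∈F} A_f) − Σ_{f∈F} f(A_f) ] is unchanged if the supremum is restricted to assignments whose sets A_f are pairwise disjoint; that is, δ_T(F) = sup{ δ(⋃_{f∈F} A_f) − Σ_{f∈F} f(A_f) : A_f finite subsets of X with A_g ∩ A_h = ∅ for g ≠ h }. -/

import Mathlib

/-- A diversity on `X`: a real-valued function on finite subsets of `X` which is
nonnegative, vanishes exactly on sets of cardinality at most one, and satisfies the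
triangle inequality `δ(A ∪ C) ≤ δ(A ∪ B) + δ(B ∪ C)` for nonempty `B`. -/
structure Diversity (X : Type*) [DecidableEq X] where
  delta : Finset X → ℝ
  nonneg : ∀ A, 0 ≤ delta A
  eq_zero_iff : ∀ A, delta A = 0 ↔ A.card ≤ 1
  triangle : ∀ A B C : Finset X, B.Nonempty →
    delta (A ∪ C) ≤ delta (A ∪ B) + delta (B ∪ C)

namespace Diversity

variable {X : Type*} [DecidableEq X]

/-- A diversity is hyperconvex if for every `r : ⟨X⟩ → ℝ` with `r ∅ = 0` such that
`δ(⋃_{A ∈ 𝒜} A) ≤ ∑_{A ∈ 𝒜} r A` for every finite collection `𝒜` of finite subsets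
of `X`, there is `z ∈ X` with `δ({z} ∪ Y) ≤ r Y` for all finite `Y ⊆ X`. -/
def Hyperconvex (D : Diversity X) : Prop :=
  ∀ r : Finset X → ℝ, r ∅ = 0 →
    (∀ 𝒜 : Finset (Finset X), D.delta (𝒜.sup id) ≤ ∑ A ∈ 𝒜, r A) →
    ∃ z : X, ∀ Y : Finset X, D.delta (insert z Y) ≤ r Y

/-- A diversity is bounded if its values are uniformly bounded above. -/
def Bounded (D : Diversity X) : Prop :=
  ∃ M : ℝ, 0 ≤ M ∧ ∀ A : Finset X, D.delta A ≤ M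

end Diversity

namespace Diversity

variable {X : Type*} [DecidableEq X]

/-- Membership in `P_X`: `f ∅ = 0` and `∑_{A ∈ 𝒜} f A ≥ δ(⋃_{A ∈ 𝒜} A)` for every
finite collection `𝒜` of finite subsets of `X`. -/
def MemP (D : Diversity X) (f : Finset X → ℝ) : Prop :=
  f ∅ = 0 ∧ ∀ 𝒜 : Finset (Finset X), D.delta (𝒜.sup id) ≤ ∑ A ∈ 𝒜, f A

/-- Membership in the tight span `T_X`: `f ∈ P_X` and `f` is minimal in `P_X` under the
pointwise order. -/
def MemTightSpan (D : Diversity X) (f : Finset X → ℝ) : Prop :=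
  D.MemP f ∧ ∀ g : Finset X → ℝ, D.MemP g → (∀ A, g A ≤ f A) → g = f

end Diversity


namespace DivAux

open Finset

variable {X : Type*} [DecidableEq X]

lemma delta_empty (D : Diversity X) : D.delta ∅ = 0 := by
  rw [D.eq_zero_iff]; simp

lemma delta_singleton (D : Diversity X) (x : X) : D.delta {x} = 0 := by
  rw [D.eq_zero_iff]; simp

lemma delta_le_insert (D : Diversity X) (A : Finset X) (b : X) :
    D.delta A ≤ D.delta (insert b A) := by
  have h := D.triangle A {b} ∅ (Finset.singleton_nonempty b)
  simp only [Finset.union_empty, delta_singleton, add_zero] at h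
  rwa [Finset.union_comm, ← Finset.insert_eq] at h

lemma delta_union_left (D : Diversity X) (A C : Finset X) :
    D.delta A ≤ D.delta (A ∪ C) := by
  classical
  induction C using Finset.induction with
  | empty => simp
  | @insert a C _ ih =>
      calc D.delta A ≤ D.delta (A ∪ C) := ih
        _ ≤ D.delta (insert a (A ∪ C)) := delta_le_insert D _ a
        _ = D.delta (A ∪ insert a C) := by rw [Finset.union_insert]

lemma delta_mono (D : Diversity X) {A B : Finset X} (h : A ⊆ B) :
    D.delta A ≤ D.delta B := by
  have := delta_union_left D A B
  rwa [Finset.union_eq_right.2 h] at this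

lemma memP_delta_le {D : Diversity X} {f : Finset X → ℝ} (hf : D.MemP f)
    (A : Finset X) : D.delta A ≤ f A := by
  have := hf.2 {A}
  simpa using this

lemma memP_nonneg {D : Diversity X} {f : Finset X → ℝ} (hf : D.MemP f)
    (A : Finset X) : 0 ≤ f A :=
  le_trans (D.nonneg A) (memP_delta_le hf A)

lemma tight_mono {D : Diversity X} {f : Finset X → ℝ}
    (hf : D.MemTightSpan f) {A B : Finset X} (h : A ⊆ B) : f A ≤ f B := by
  classical
  by_contra hcon
  push_neg at hcon  -- f B < f A
  set g : Finset X → ℝ := Function.update f A (f B) with hg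
  have hAne : A ≠ ∅ := by
    intro h0
    have h1 : f A = 0 := h0 ▸ hf.1.1
    have h2 : 0 ≤ f B := memP_nonneg hf.1 B
    linarith
  have hgP : D.MemP g := by
    constructor
    · rw [hg, Function.update_of_ne (Ne.symm hAne)]
      exact hf.1.1
    · intro 𝒜
      by_cases hA : A ∈ 𝒜
      · have hsum : ∑ C ∈ 𝒜, g C = f B + ∑ C ∈ 𝒜.erase A, f C := by
          rw [← Finset.add_sum_erase _ g hA]
          congr 1
          · simp [hg]
          · refine Finset.sum_congr rfl fun C hC => ?_
            rw [hg, Function.update_of_ne (Finset.ne_of_mem_erase hC)]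
        set 𝒜' := insert B (𝒜.erase A) with h𝒜'
        have hsub : 𝒜.sup id ⊆ 𝒜'.sup id := by
          intro x hx
          rw [Finset.mem_sup] at hx ⊢
          obtain ⟨C, hC, hxC⟩ := hx
          by_cases hCA : C = A
          · exact ⟨B, by simp [h𝒜'], h (hCA ▸ hxC)⟩
          · exact ⟨C, by simp [h𝒜', Finset.mem_erase, hCA, hC], hxC⟩
        have h1 : D.delta (𝒜.sup id) ≤ D.delta (𝒜'.sup id) := delta_mono D hsub
        have h2 : D.delta (𝒜'.sup id) ≤ ∑ C ∈ 𝒜', f C := hf.1.2 𝒜'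
        have h3 : ∑ C ∈ 𝒜', f C ≤ f B + ∑ C ∈ 𝒜.erase A, f C := by
          by_cases hB : B ∈ 𝒜.erase A
          · rw [h𝒜', Finset.insert_eq_self.2 hB]
            have := memP_nonneg hf.1 B
            linarith
          · rw [h𝒜', Finset.sum_insert hB]
        linarith
      · have hsum : ∑ C ∈ 𝒜, g C = ∑ C ∈ 𝒜, f C := by
          refine Finset.sum_congr rfl fun C hC => ?_
          rw [hg, Function.update_of_ne (by rintro rfl; exact hA hC)]
        rw [hsum]
        exact hf.1.2 𝒜
  have hle : ∀ C, g C ≤ f C := by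
    intro C
    by_cases hC : C = A
    · subst hC; rw [hg, Function.update_self]; exact le_of_lt hcon
    · rw [hg, Function.update_of_ne hC]
  have heq := hf.2 g hgP hle
  have : g A = f A := by rw [heq]
  rw [hg, Function.update_self] at this
  linarith

lemma exists_disjoint {D : Diversity X} {ι : Type*} [Fintype ι]
    {F : ι → Finset X → ℝ} (hF : ∀ i, D.MemTightSpan (F i)) (A : ι → Finset X) :
    ∃ A' : ι → Finset X, (∀ i j, i ≠ j → Disjoint (A' i) (A' j)) ∧
      Finset.univ.sup A' = Finset.univ.sup A ∧ ∀ i, F i (A' i) ≤ F i (A i) := by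
  classical
  let e := Fintype.equivFin ι
  set A' : ι → Finset X :=
    fun i => A i \ (Finset.univ.filter (fun j => e j < e i)).sup A with hA'
  have hsubA : ∀ i, A' i ⊆ A i := fun i => Finset.sdiff_subset
  have hdisj' : ∀ i j, e i < e j → Disjoint (A' i) (A' j) := by
    intro i j hij
    have h1 : A' i ⊆ (Finset.univ.filter (fun k => e k < e j)).sup A :=
      (hsubA i).trans (Finset.le_sup (by simp [hij]))
    have h2 : Disjoint (A' j) ((Finset.univ.filter (fun k => e k < e j)).sup A) :=
      Finset.sdiff_disjoint
    exact (h2.mono_right h1).symm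
  refine ⟨A', ?_, ?_, fun i => tight_mono (hF i) (hsubA i)⟩
  · intro i j hij
    rcases lt_or_gt_of_ne (fun h => hij (e.injective h)) with h | h
    · exact hdisj' i j h
    · exact (hdisj' j i h).symm
  · refine Finset.Subset.antisymm (Finset.sup_mono_fun fun i _ => hsubA i) ?_
    intro x hx
    rw [Finset.mem_sup] at hx
    obtain ⟨i, _, hxi⟩ := hx
    set S := Finset.univ.filter (fun k => x ∈ A k) with hS
    have hiS : i ∈ S := by simp [hS, hxi]
    obtain ⟨m, hmS, hmin⟩ := S.exists_min_image e ⟨i, hiS⟩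
    have hxm : x ∈ A m := by simpa [hS] using hmS
    rw [Finset.mem_sup]
    refine ⟨m, Finset.mem_univ m, ?_⟩
    rw [hA', Finset.mem_sdiff]
    refine ⟨hxm, fun hx' => ?_⟩
    rw [Finset.mem_sup] at hx'
    obtain ⟨k, hk, hxk⟩ := hx'
    have hklt : e k < e m := by simpa using hk
    have : e m ≤ e k := hmin k (by simp [hS, hxk])
    exact absurd hklt (not_lt.2 this)

end DivAux

/-- Let `(X, δ)` be a diversity and `F = (F i)_{i ∈ ι}` a nonempty
finite (injectively indexed) family of elements of the tight span `T_X`. Then the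
supremum defining `δ_T(F)`, taken over all assignments `i ↦ A i` of finite subsets of
`X`, equals the supremum restricted to assignments with pairwise disjoint sets. -/
theorem tightSpan_diversity_sup_pairwise_disjoint
    {X : Type*} [DecidableEq X] (D : Diversity X)
    {ι : Type*} [Fintype ι] [Nonempty ι]
    (F : ι → Finset X → ℝ)
    (hF : ∀ i, D.MemTightSpan (F i))
    (hFinj : Function.Injective F) :
    sSup {v : ℝ | ∃ A : ι → Finset X,
        v = D.delta (Finset.univ.sup A) - ∑ i, F i (A i)} =
    sSup {v : ℝ | ∃ A : ι → Finset X,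
        (∀ i j, i ≠ j → Disjoint (A i) (A j)) ∧
        v = D.delta (Finset.univ.sup A) - ∑ i, F i (A i)} := by
  
  classical
  have hsub : {v : ℝ | ∃ A : ι → Finset X,
        (∀ i j, i ≠ j → Disjoint (A i) (A j)) ∧
        v = D.delta (Finset.univ.sup A) - ∑ i, F i (A i)} ⊆
      {v : ℝ | ∃ A : ι → Finset X,
        v = D.delta (Finset.univ.sup A) - ∑ i, F i (A i)} := by
    rintro v ⟨A, _, hv⟩
    exact ⟨A, hv⟩
  have hkey : ∀ v ∈ {v : ℝ | ∃ A : ι → Finset X,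
        v = D.delta (Finset.univ.sup A) - ∑ i, F i (A i)},
      ∃ w ∈ {v : ℝ | ∃ A : ι → Finset X,
        (∀ i j, i ≠ j → Disjoint (A i) (A j)) ∧
        v = D.delta (Finset.univ.sup A) - ∑ i, F i (A i)}, v ≤ w := by
    rintro v ⟨A, rfl⟩
    obtain ⟨A', hd, hu, hm⟩ := DivAux.exists_disjoint hF A
    refine ⟨D.delta (Finset.univ.sup A') - ∑ i, F i (A' i), ⟨A', hd, rfl⟩, ?_⟩
    rw [hu]
    exact sub_le_sub_left (Finset.sum_le_sum fun i _ => hm i) _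
  have hne2 : ({v : ℝ | ∃ A : ι → Finset X,
        (∀ i j, i ≠ j → Disjoint (A i) (A j)) ∧
        v = D.delta (Finset.univ.sup A) - ∑ i, F i (A i)}).Nonempty :=
    ⟨_, ⟨fun _ => ∅, fun i j _ => by simp, rfl⟩⟩
  have hne1 : ({v : ℝ | ∃ A : ι → Finset X,
        v = D.delta (Finset.univ.sup A) - ∑ i, F i (A i)}).Nonempty :=
    ⟨_, hsub hne2.choose_spec⟩
  by_cases hbdd : BddAbove {v : ℝ | ∃ A : ι → Finset X,
        v = D.delta (Finset.univ.sup A) - ∑ i, F i (A i)}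
  · refine le_antisymm ?_ (csSup_le_csSup hbdd hne2 hsub)
    refine csSup_le hne1 fun v hv => ?_
    obtain ⟨w, hw, hvw⟩ := hkey v hv
    exact hvw.trans (le_csSup (hbdd.mono hsub) hw)
  · have hbdd2 : ¬ BddAbove {v : ℝ | ∃ A : ι → Finset X,
        (∀ i j, i ≠ j → Disjoint (A i) (A j)) ∧
        v = D.delta (Finset.univ.sup A) - ∑ i, F i (A i)} := by
      intro ⟨M, hM⟩
      refine hbdd ⟨M, fun v hv => ?_⟩
      obtain ⟨w, hw, hvw⟩ := hkey v hv
      exact hvw.trans (hM hw)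
    rw [Real.sSup_of_not_bddAbove hbdd, Real.sSup_of_not_bddAbove hbdd2]
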